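/- Consider the weights d_y > 0 and d₁,…,dₙ with d_y, d₁,…,dₙ linearly independent over ℤ, mᵢ ≥ 1, r ≥ 2, and weight on z equal to r·d_y − Σ mᵢ dᵢ. In the ring ℂ[x₁,…,xₙ,y,z]/(x^{[m]} z − y^r), every nonzero homogeneous element (for the induced grading by weight) is the image of a unique monomial of ℂ[x₁,…,xₙ,y,z] not divisible by x₁^{m₁}⋯xₙ^{mₙ} z. -/

import Mathlib

open MvPolynomial

set_option synthInstance.maxHeartbeats 1000000
set_option maxHeartbeats 1000000

noncomputable def stmt18toE {n : ℕ} (a : Fin n → ℕ) (b g : ℕ) : (Fin n ⊕ Fin 2) →₀ ℕ :=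
  Finsupp.equivFunOnFinite.symm (Sum.elim a ![b, g])

@[simp] lemma stmt18toE_inl {n : ℕ} (a : Fin n → ℕ) (b g : ℕ) (i : Fin n) :
    stmt18toE a b g (Sum.inl i) = a i := rfl

@[simp] lemma stmt18toE_inr0 {n : ℕ} (a : Fin n → ℕ) (b g : ℕ) :
    stmt18toE a b g (Sum.inr 0) = b := rfl

@[simp] lemma stmt18toE_inr1 {n : ℕ} (a : Fin n → ℕ) (b g : ℕ) :
    stmt18toE a b g (Sum.inr 1) = g := rfl

lemma stmt18prodX {n : ℕ} (a : Fin n → ℕ) (b g : ℕ) (c : ℂ) :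
    C c * (∏ i, X (Sum.inl i) ^ a i) * X (Sum.inr 0) ^ b * X (Sum.inr 1) ^ g
      = monomial (stmt18toE a b g) c := by
  rw [monomial_eq, Finsupp.prod_fintype _ _ (fun s => pow_zero _)]
  rw [Fintype.prod_sum_type]
  simp [Fin.prod_univ_two, mul_assoc]

noncomputable def stmt18psi {n : ℕ} (m : Fin n → ℕ) (r : ℕ) :
    ((Fin n ⊕ Fin 2) →₀ ℕ) →+ (Fin n → ℤ) × ℤ where
  toFun e := (fun i => (e (Sum.inl i) : ℤ) - m i * e (Sum.inr 1),
    (e (Sum.inr 0) : ℤ) + r * e (Sum.inr 1))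
  map_zero' := by ext i <;> simp
  map_add' e f := by
    ext i <;> simp [Finsupp.add_apply] <;> ring

noncomputable def stmt18phi {n : ℕ} (m : Fin n → ℕ) (r : ℕ) :
    MvPolynomial (Fin n ⊕ Fin 2) ℂ →+* AddMonoidAlgebra ℂ ((Fin n → ℤ) × ℤ) :=
  AddMonoidAlgebra.mapDomainRingHom ℂ (stmt18psi m r)

lemma stmt18phi_monomial {n : ℕ} (m : Fin n → ℕ) (r : ℕ) (e : (Fin n ⊕ Fin 2) →₀ ℕ) (c : ℂ) :
    stmt18phi m r (monomial e c) = AddMonoidAlgebra.single (stmt18psi m r e) c := by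
  rw [← single_eq_monomial]
  exact AddMonoidAlgebra.mapDomain_single

lemma stmt18gen_eq {n : ℕ} (m : Fin n → ℕ) (r : ℕ) :
    (∏ i, (X (Sum.inl i) : MvPolynomial (Fin n ⊕ Fin 2) ℂ) ^ m i) * X (Sum.inr 1)
        - X (Sum.inr 0) ^ r
      = monomial (stmt18toE m 0 1) 1 - monomial (stmt18toE 0 r 0) 1 := by
  rw [← stmt18prodX m 0 1 1, ← stmt18prodX 0 r 0 1]
  simp

lemma stmt18red_inj {n : ℕ} (m : Fin n → ℕ) (hm : ∀ i, 1 ≤ m i) (r : ℕ)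
    (e f : (Fin n ⊕ Fin 2) →₀ ℕ)
    (he : ¬((∀ i, m i ≤ e (Sum.inl i)) ∧ 1 ≤ e (Sum.inr 1)))
    (hf : ¬((∀ i, m i ≤ f (Sum.inl i)) ∧ 1 ≤ f (Sum.inr 1)))
    (hpsi : stmt18psi m r e = stmt18psi m r f) : e = f := by
  rw [Prod.ext_iff] at hpsi
  obtain ⟨h1, h2⟩ := hpsi
  simp only [stmt18psi, AddMonoidHom.coe_mk, ZeroHom.coe_mk] at h1 h2
  have h1' : ∀ i, (e (Sum.inl i) : ℤ) - m i * e (Sum.inr 1)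
      = (f (Sum.inl i) : ℤ) - m i * f (Sum.inr 1) := fun i => congrFun h1 i
  have hz : e (Sum.inr 1) = f (Sum.inr 1) := by
    rcases lt_trichotomy (e (Sum.inr 1)) (f (Sum.inr 1)) with h | h | h
    · exfalso; apply hf
      refine ⟨fun i => ?_, by omega⟩
      have h1i := h1' i
      have hmi : (1:ℤ) ≤ (m i : ℤ) := by exact_mod_cast hm i
      have hz1 : (e (Sum.inr 1):ℤ) + 1 ≤ (f (Sum.inr 1):ℤ) := by exact_mod_cast h
      have hnn : (0:ℤ) ≤ (e (Sum.inl i):ℤ) := Int.natCast_nonneg _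
      have : (m i:ℤ) ≤ (f (Sum.inl i):ℤ) := by nlinarith
      exact_mod_cast this
    · exact h
    · exfalso; apply he
      refine ⟨fun i => ?_, by omega⟩
      have h1i := h1' i
      have hmi : (1:ℤ) ≤ (m i : ℤ) := by exact_mod_cast hm i
      have hz1 : (f (Sum.inr 1):ℤ) + 1 ≤ (e (Sum.inr 1):ℤ) := by exact_mod_cast h
      have hnn : (0:ℤ) ≤ (f (Sum.inl i):ℤ) := Int.natCast_nonneg _
      have : (m i:ℤ) ≤ (e (Sum.inl i):ℤ) := by nlinarith
      exact_mod_cast this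
  have hzZ : (e (Sum.inr 1):ℤ) = (f (Sum.inr 1):ℤ) := by exact_mod_cast hz
  ext s
  rcases s with i | j
  · have := h1' i; rw [hzZ] at this; omega
  · fin_cases j
    · show e (Sum.inr 0) = f (Sum.inr 0)
      rw [hzZ] at h2; omega
    · exact hz

lemma stmt18reduce {n : ℕ} (m : Fin n → ℕ) (r : ℕ)
    (I : Ideal (MvPolynomial (Fin n ⊕ Fin 2) ℂ))
    (hI : I = Ideal.span
      {(∏ i, MvPolynomial.X (Sum.inl i) ^ m i) * MvPolynomial.X (Sum.inr 1)
        - MvPolynomial.X (Sum.inr 0) ^ r}) :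
    ∀ (N : ℕ) (e : (Fin n ⊕ Fin 2) →₀ ℕ), e (Sum.inr 1) ≤ N →
    ∃ f : (Fin n ⊕ Fin 2) →₀ ℕ,
      ¬((∀ i, m i ≤ f (Sum.inl i)) ∧ 1 ≤ f (Sum.inr 1)) ∧
      stmt18psi m r f = stmt18psi m r e ∧
      monomial e (1:ℂ) - monomial f 1 ∈ I := by
  intro N
  induction N with
  | zero =>
    intro e hN
    exact ⟨e, by omega, rfl, by simp [sub_self]⟩
  | succ N ih =>
    intro e hN
    by_cases h : (∀ i, m i ≤ e (Sum.inl i)) ∧ 1 ≤ e (Sum.inr 1)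
    · set e' : (Fin n ⊕ Fin 2) →₀ ℕ :=
        stmt18toE (fun i => e (Sum.inl i) - m i) (e (Sum.inr 0) + r) (e (Sum.inr 1) - 1)
        with he'
      obtain ⟨f, hf1, hf2, hf3⟩ := ih e' (by simp [he']; omega)
      refine ⟨f, hf1, ?_, ?_⟩
      · rw [hf2]
        ext i
        · simp only [stmt18psi, AddMonoidHom.coe_mk, ZeroHom.coe_mk, he',
            stmt18toE_inl, stmt18toE_inr1]
          have := h.1 i
          have := h.2
          push_cast [Nat.cast_sub (h.1 i), Nat.cast_sub h.2]
          ring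
        · simp only [stmt18psi, AddMonoidHom.coe_mk, ZeroHom.coe_mk, he',
            stmt18toE_inr0, stmt18toE_inr1]
          push_cast [Nat.cast_sub h.2]
          ring
      · have hstep : monomial e (1:ℂ) - monomial e' 1 ∈ I := by
          set g : (Fin n ⊕ Fin 2) →₀ ℕ :=
            stmt18toE (fun i => e (Sum.inl i) - m i) (e (Sum.inr 0)) (e (Sum.inr 1) - 1)
            with hg
          have hA : g + stmt18toE m 0 1 = e := by
            ext s
            rcases s with i | j
            · simp only [Finsupp.add_apply, hg, stmt18toE_inl]
              have := h.1 i; omega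
            · fin_cases j
              · show (g + stmt18toE m 0 1) (Sum.inr 0) = e (Sum.inr 0)
                simp [hg, Finsupp.add_apply]
              · show (g + stmt18toE m 0 1) (Sum.inr 1) = e (Sum.inr 1)
                simp only [Finsupp.add_apply, hg, stmt18toE_inr1]
                have := h.2; omega
          have hB : g + stmt18toE 0 r 0 = e' := by
            ext s
            rcases s with i | j
            · simp [hg, he', Finsupp.add_apply]
            · fin_cases j
              · show (g + stmt18toE (0 : Fin n → ℕ) r 0) (Sum.inr 0) = e' (Sum.inr 0)
                simp [hg, he', Finsupp.add_apply, Nat.add_comm]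
              · show (g + stmt18toE (0 : Fin n → ℕ) r 0) (Sum.inr 1) = e' (Sum.inr 1)
                simp [hg, he', Finsupp.add_apply]
          have key : monomial e (1:ℂ) - monomial e' 1
              = monomial g 1 * ((∏ i, X (Sum.inl i) ^ m i) * X (Sum.inr 1)
                  - X (Sum.inr 0) ^ r) := by
            rw [stmt18gen_eq, mul_sub, monomial_mul, monomial_mul, mul_one, hA, hB]
          rw [key, hI]
          exact Ideal.mul_mem_left _ _ (Ideal.subset_span rfl)
        have : monomial e (1:ℂ) - monomial f 1
            = (monomial e 1 - monomial e' 1) + (monomial e' 1 - monomial f 1) := by ring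
        rw [this]
        exact I.add_mem hstep hf3
    · exact ⟨e, h, rfl, by simp [sub_self]⟩


/-- With weights `d_y > 0`, `d₁,…,dₙ` such that `d_y,d₁,…,dₙ` are
`ℤ`-linearly independent, `mᵢ ≥ 1`, `r ≥ 2`, and `z` of weight `r·d_y − Σmᵢdᵢ`,
every nonzero weight-homogeneous element of `ℂ[x,y,z]/(x^{[m]}z − y^r)` is the
image of a unique monomial not divisible by `x^{[m]} z`. -/
theorem stmt18 (n : ℕ) (dy : ℝ) (hdy : 0 < dy) (d : Fin n → ℝ)
    (hind : ∀ (c : ℤ) (e : Fin n → ℤ),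
      (c : ℝ) * dy + ∑ i, (e i : ℝ) * d i = 0 → c = 0 ∧ e = 0)
    (m : Fin n → ℕ) (hm : ∀ i, 1 ≤ m i) (r : ℕ) (hr : 2 ≤ r)
    (w : ((Fin n ⊕ Fin 2) →₀ ℕ) → ℝ)
    (hw : w = fun e => (∑ i, (e (Sum.inl i) : ℝ) * d i)
        + (e (Sum.inr 0) : ℝ) * dy
        + (e (Sum.inr 1) : ℝ) * ((r : ℝ) * dy - ∑ i, (m i : ℝ) * d i))
    (I : Ideal (MvPolynomial (Fin n ⊕ Fin 2) ℂ))
    (hI : I = Ideal.span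
      {(∏ i, MvPolynomial.X (Sum.inl i) ^ m i) * MvPolynomial.X (Sum.inr 1)
        - MvPolynomial.X (Sum.inr 0) ^ r})
    (p : MvPolynomial (Fin n ⊕ Fin 2) ℂ)
    (hhom : ∃ t : ℝ, ∀ e ∈ p.support, w e = t)
    (hne : Ideal.Quotient.mk I p ≠ 0) :
    ∃! q : ((Fin n → ℕ) × ℕ × ℕ) × ℂ,
      ¬ ((∀ i, m i ≤ q.1.1 i) ∧ 1 ≤ q.1.2.2) ∧
      Ideal.Quotient.mk I
        (MvPolynomial.C q.2 * (∏ i, MvPolynomial.X (Sum.inl i) ^ q.1.1 i)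
          * MvPolynomial.X (Sum.inr 0) ^ q.1.2.1
          * MvPolynomial.X (Sum.inr 1) ^ q.1.2.2) = Ideal.Quotient.mk I p := by
  -- ψ-equality from equal weight
  have hwpsi : ∀ e f : (Fin n ⊕ Fin 2) →₀ ℕ, w e = w f →
      stmt18psi m r e = stmt18psi m r f := by
    intro e f hwef
    subst hw
    simp only at hwef
    have key := hind ((stmt18psi m r e).2 - (stmt18psi m r f).2)
      (fun i => (stmt18psi m r e).1 i - (stmt18psi m r f).1 i) ?_
    · have k1 := key.1
      have k2 := key.2
      ext i
      · have := congrFun k2 i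
        simp only [Pi.zero_apply, sub_eq_zero] at this
        exact this
      · exact sub_eq_zero.mp k1
    · simp only [stmt18psi, AddMonoidHom.coe_mk, ZeroHom.coe_mk]
      push_cast
      have hsplit : ∀ i : Fin n,
          ((e (Sum.inl i) : ℝ) - (m i : ℝ) * (e (Sum.inr 1) : ℝ)
            - ((f (Sum.inl i) : ℝ) - (m i : ℝ) * (f (Sum.inr 1) : ℝ))) * d i
          = (e (Sum.inl i) : ℝ) * d i
            - (e (Sum.inr 1) : ℝ) * ((m i : ℝ) * d i)
            - ((f (Sum.inl i) : ℝ) * d i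
              - (f (Sum.inr 1) : ℝ) * ((m i : ℝ) * d i)) := fun i => by ring
      rw [Finset.sum_congr rfl (fun i _ => hsplit i), Finset.sum_sub_distrib,
        Finset.sum_sub_distrib, Finset.sum_sub_distrib, ← Finset.mul_sum, ← Finset.mul_sum]
      linear_combination hwef
  -- φ kills I
  have hker : I ≤ RingHom.ker (stmt18phi m r) := by
    rw [hI, Ideal.span_le]
    intro x hx
    rw [Set.mem_singleton_iff] at hx
    subst hx
    rw [SetLike.mem_coe, RingHom.mem_ker, stmt18gen_eq, map_sub,
      stmt18phi_monomial, stmt18phi_monomial, sub_eq_zero]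
    congr 1
    ext i
    · simp [stmt18psi]
    · simp [stmt18psi]
  obtain ⟨t, ht⟩ := hhom
  have hp0 : p ≠ 0 := fun h => hne (by simp [h])
  obtain ⟨e₀, he₀⟩ := MvPolynomial.support_nonempty.mpr hp0
  obtain ⟨f₀, hf₀red, hf₀psi, hf₀mem⟩ := stmt18reduce m r I hI (e₀ (Sum.inr 1)) e₀ le_rfl
  -- every support monomial is congruent to monomial f₀ 1
  have hcong : ∀ e ∈ p.support, monomial e (1:ℂ) - monomial f₀ 1 ∈ I := by
    intro e he
    obtain ⟨f, hfr, hfp, hfm⟩ := stmt18reduce m r I hI (e (Sum.inr 1)) e le_rfl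
    have hψ : stmt18psi m r f = stmt18psi m r f₀ := by
      rw [hfp, hf₀psi]
      exact hwpsi e e₀ ((ht e he).trans (ht e₀ he₀).symm)
    have : f = f₀ := stmt18red_inj m hm r f f₀ hfr hf₀red hψ
    rw [this] at hfm
    exact hfm
  set c : ℂ := ∑ e ∈ p.support, coeff e p with hc
  have hsub : p - monomial f₀ c ∈ I := by
    have hps : p = ∑ e ∈ p.support, monomial e (coeff e p) :=
      (p.support_sum_monomial_coeff).symm
    have hms : monomial f₀ c = ∑ e ∈ p.support, monomial f₀ (coeff e p) := by
      rw [hc]; exact map_sum (monomial f₀) _ _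
    rw [hps, hms, ← Finset.sum_sub_distrib]
    refine Ideal.sum_mem I fun e he => ?_
    have : monomial e (coeff e p) - monomial f₀ (coeff e p)
        = C (coeff e p) * (monomial e 1 - monomial f₀ 1) := by
      rw [mul_sub, C_mul_monomial, C_mul_monomial, mul_one]
    rw [this]
    exact Ideal.mul_mem_left _ _ (hcong e he)
  have hmkeq : Ideal.Quotient.mk I (monomial f₀ c) = Ideal.Quotient.mk I p := by
    rw [Ideal.Quotient.eq]
    simpa [neg_sub] using I.neg_mem hsub
  have htoE : stmt18toE (fun i => f₀ (Sum.inl i)) (f₀ (Sum.inr 0)) (f₀ (Sum.inr 1)) = f₀ := by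
    ext s
    rcases s with i | j
    · rfl
    · fin_cases j <;> rfl
  have hcne : c ≠ 0 := by
    intro h
    rw [h] at hmkeq
    simp only [monomial_zero, map_zero] at hmkeq
    exact hne hmkeq.symm
  refine ⟨((fun i => f₀ (Sum.inl i), f₀ (Sum.inr 0), f₀ (Sum.inr 1)), c), ⟨?_, ?_⟩, ?_⟩
  · exact hf₀red
  · rw [stmt18prodX, htoE]
    exact hmkeq
  · rintro ⟨⟨a, b, g⟩, c'⟩ ⟨hred', heq'⟩
    rw [stmt18prodX] at heq'
    set F := stmt18toE a b g with hF
    have hFred : ¬((∀ i, m i ≤ F (Sum.inl i)) ∧ 1 ≤ F (Sum.inr 1)) := by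
      simpa [hF] using hred'
    have hc'ne : c' ≠ 0 := by
      intro h
      rw [h] at heq'
      simp only [monomial_zero, map_zero] at heq'
      exact hne heq'.symm
    have hmem : monomial F c' - monomial f₀ c ∈ I := by
      rw [← Ideal.Quotient.eq]
      rw [heq', hmkeq]
    have hphieq : AddMonoidAlgebra.single (stmt18psi m r F) c'
        = AddMonoidAlgebra.single (stmt18psi m r f₀) c := by
      have h0 := hker hmem
      rw [RingHom.mem_ker, map_sub, stmt18phi_monomial, stmt18phi_monomial,
        sub_eq_zero] at h0
      exact h0
    have hsingle := AddMonoidAlgebra.single_inj.mp hphieq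
    rcases hsingle with ⟨hψeq, hcc⟩ | ⟨h1, h2⟩
    · have hFf : F = f₀ := stmt18red_inj m hm r F f₀ hFred hf₀red hψeq
      have ha : a = fun i => f₀ (Sum.inl i) := by
        funext i
        rw [← hFf]; rfl
      have hb : b = f₀ (Sum.inr 0) := by rw [← hFf]; rfl
      have hg : g = f₀ (Sum.inr 1) := by rw [← hFf]; rfl
      simp [ha, hb, hg, hcc]
    · exact absurd h1 hc'ne
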